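/- Fix t ∈ Ω. Under conditions C1–C6, the expectation of the second proposed cumulative survival function estimator, E[𝕊̃_{X,2}(t)] = E[∫_{−∞}^{g⁻¹(X)} g′(z) V((g⁻¹(t) − z)/h) dz], satisfies, as h → 0⁺: E[𝕊̃_{X,2}(t)] − 𝕊_X(t) = (h²/2) b₃(t) ∫_{−∞}^{∞} y² K(y) dy + o(h²), where b₃(t) = (g′(g⁻¹(t)))² f_X(t) − g″(g⁻¹(t)) S_X(t). -/

import Mathlib

open MeasureTheory Filter Asymptotics

/-- `V x = ∫_x^∞ K(z) dz`. -/
noncomputable def kerV (K : ℝ → ℝ) (x : ℝ) : ℝ := ∫ z in Set.Ioi x, K z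

/-- `W x = ∫_{-∞}^x K(z) dz`. -/
noncomputable def kerW (K : ℝ → ℝ) (x : ℝ) : ℝ := ∫ z in Set.Iic x, K z

/-- The survival function of `X`: `S_X(t) = P(X > t)`. -/
noncomputable def survival {α : Type*} [MeasurableSpace α] (μ : Measure α)
    (X : α → ℝ) (t : ℝ) : ℝ := (μ {ω | t < X ω}).toReal

/-- The cumulative survival function of `X`: `𝕊_X(t) = ∫_t^∞ S_X(x) dx`. -/
noncomputable def cumSurvival {α : Type*} [MeasurableSpace α] (μ : Measure α)
    (X : α → ℝ) (t : ℝ) : ℝ := ∫ x in Set.Ioi t, survival μ X x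

/-- `𝕊̄_X(t) = ∫_t^∞ 𝕊_X(x) dx`. -/
noncomputable def cumCumSurvival {α : Type*} [MeasurableSpace α] (μ : Measure α)
    (X : α → ℝ) (t : ℝ) : ℝ := ∫ x in Set.Ioi t, cumSurvival μ X x


open Set

set_option linter.unusedSectionVars false
set_option linter.unusedVariables false
set_option maxHeartbeats 1000000


lemma integrable_of_integral_eq_one {K : ℝ → ℝ} (h : (∫ x, K x) = 1) : Integrable K := by
  by_contra hc
  rw [integral_undef hc] at h
  norm_num at h

lemma kerV_nonneg {K : ℝ → ℝ} (hK : ∀ x, 0 ≤ K x) (x : ℝ) : 0 ≤ kerV K x :=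
  setIntegral_nonneg measurableSet_Ioi fun z _ => hK z

lemma kerV_add_kerW {K : ℝ → ℝ} (hKi : Integrable K) (x : ℝ) :
    kerV K x + kerW K x = ∫ y, K y := by
  have := integral_add_compl (measurableSet_Ioi (a := x)) hKi
  rwa [compl_Ioi] at this

lemma kerV_neg_eq_kerW {K : ℝ → ℝ} (hK_symm : ∀ x, K (-x) = K x) (x : ℝ) :
    kerV K (-x) = kerW K x := by
  have h1 : (∫ z in Ioi (-x), K (-z)) = ∫ z in Iic x, K z := by
    simpa using integral_comp_neg_Ioi (-x) K
  calc kerV K (-x) = ∫ z in Ioi (-x), K (-z) := by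
        simp only [kerV]; exact (setIntegral_congr_fun measurableSet_Ioi
          (fun z _ => (hK_symm z).symm))
    _ = kerW K x := h1

lemma integrable_deriv_g {K g : ℝ → ℝ} (hg_cont : Continuous (deriv g))
    (hK_symm : ∀ x, K (-x) = K x) (hK_one : (∫ x, K x) = 1)
    (hgV : ∃ ε > (0 : ℝ), ∀ u : ℝ, |u| < ε →
      Integrable (fun x => deriv g (u * x) * kerV K x)) :
    Integrable (deriv g) := by
  obtain ⟨ε, hε, hV⟩ := hgV
  set u := ε / 2 with hu_def
  have hu : |u| < ε := by rw [abs_of_pos (by positivity)]; linarith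
  have hu' : |(-u)| < ε := by rwa [abs_neg]
  have h1 := hV u hu
  have h2 := (hV (-u) hu').comp_neg
  have h2' : Integrable (fun x => deriv g (u * x) * kerW K x) := by
    have : (fun x => deriv g (-u * -x) * kerV K (-x))
        = fun x => deriv g (u * x) * kerW K x := by
      funext x; rw [neg_mul_neg, kerV_neg_eq_kerW hK_symm]
    rwa [this] at h2
  have h3 : Integrable (fun x => deriv g (u * x)) := by
    have h4 := h1.add h2'
    refine h4.congr (Eventually.of_forall fun x => ?_)
    simp only [Pi.add_apply]
    rw [← mul_add, kerV_add_kerW (_root_.integrable_of_integral_eq_one hK_one), hK_one, mul_one]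
  have hu0 : u ≠ 0 := by positivity
  rw [show (fun x => deriv g (u * x)) = fun x => deriv g (u • x) from rfl] at h3
  exact (integrable_comp_smul_iff volume (deriv g) hu0).mp h3

lemma deriv_nonneg_of_monotone {g : ℝ → ℝ} (hg : Monotone g)
    (hd : Differentiable ℝ g) (y : ℝ) : 0 ≤ deriv g y := by
  have h := (hd y).hasDerivAt
  rw [hasDerivAt_iff_tendsto_slope] at h
  refine ge_of_tendsto h ?_
  filter_upwards [self_mem_nhdsWithin] with x hx
  rw [slope_def_field]
  rcases lt_or_gt_of_ne (Ne.symm hx) with hlt | hlt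
  · exact div_nonneg (sub_nonneg.mpr (hg hlt.le)) (sub_nonneg.mpr hlt.le)
  · exact div_nonneg_of_nonpos (sub_nonpos.mpr (hg hlt.le)) (sub_nonpos.mpr hlt.le)


section gbd
variable {g : ℝ → ℝ} (hd : Differentiable ℝ g) (hc : Continuous (deriv g))
  (hi : Integrable (deriv g)) (hn : ∀ x, 0 ≤ deriv g x)

include hd hi in
lemma g_sub_eq (a b : ℝ) : g b - g a = ∫ x in a..b, deriv g x :=
  (intervalIntegral.integral_deriv_eq_sub (fun x _ => hd x) (hi.intervalIntegrable)).symm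

include hd hi hn in
lemma g_sub_le (a b : ℝ) (hab : a ≤ b) : g b - g a ≤ ∫ x, deriv g x := by
  rw [g_sub_eq hd hi, intervalIntegral.integral_of_le hab]
  exact setIntegral_le_integral hi (Eventually.of_forall hn)

include hd hi hn in
lemma abs_g_le (y : ℝ) : |g y| ≤ |g 0| + ∫ x, deriv g x := by
  rcases le_or_gt 0 y with h | h
  · have h1 := g_sub_le hd hi hn 0 y h
    have h2 : g 0 ≤ g y := by
      have := g_sub_eq (g := g) hd hi 0 y
      nlinarith [intervalIntegral.integral_nonneg (μ := volume) h (fun u _ => hn u)]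
    rw [abs_le]; constructor
    · nlinarith [abs_nonneg (g 0), neg_abs_le (g 0), integral_nonneg (μ := volume) (f := deriv g) hn]
    · nlinarith [le_abs_self (g 0)]
  · have h1 := g_sub_le hd hi hn y 0 h.le
    have h2 : g y ≤ g 0 := by
      have := g_sub_eq (g := g) hd hi y 0
      nlinarith [intervalIntegral.integral_nonneg (μ := volume) h.le (fun u _ => hn u)]
    rw [abs_le]; constructor
    · nlinarith [neg_abs_le (g 0)]
    · nlinarith [le_abs_self (g 0), integral_nonneg (μ := volume) (f := deriv g) hn]
end gbd

section surv
variable {α : Type*} [MeasurableSpace α] (μ : Measure α) [IsProbabilityMeasure μ]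
  (X : α → ℝ)

lemma survival_nonneg (x : ℝ) : 0 ≤ survival μ X x := ENNReal.toReal_nonneg

lemma survival_le_one (x : ℝ) : survival μ X x ≤ 1 := by
  have : μ {ω | x < X ω} ≤ 1 := prob_le_one
  simpa [survival] using ENNReal.toReal_le_of_le_ofReal one_pos.le (by simpa using this)

lemma survival_antitone : Antitone (survival μ X) := by
  intro a b hab
  apply ENNReal.toReal_le_toReal (measure_ne_top μ _) (measure_ne_top μ _) |>.mpr
  exact measure_mono fun ω h => lt_of_le_of_lt hab h

lemma survival_measurable : Measurable (survival μ X) :=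
  (survival_antitone μ X).measurable

lemma survival_eq_zero {Ω : Set ℝ} (hXΩ : ∀ᵐ ω ∂μ, X ω ∈ Ω) {M x : ℝ}
    (hΩM : ∀ s ∈ Ω, s ≤ M) (hMx : M ≤ x) : survival μ X x = 0 := by
  have hnull : μ {ω | ¬ X ω ∈ Ω} = 0 := by
    rw [← ae_iff] at *; exact hXΩ
  have hsub : {ω | x < X ω} ⊆ {ω | ¬ X ω ∈ Ω} := by
    intro ω hω hmem
    exact absurd (lt_of_lt_of_le hω ((hΩM _ hmem).trans hMx)) (lt_irrefl _)
  simp [survival, measure_mono_null hsub hnull]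

lemma survival_integrableOn {Ω : Set ℝ} (hXΩ : ∀ᵐ ω ∂μ, X ω ∈ Ω) {M : ℝ}
    (hΩM : ∀ s ∈ Ω, s ≤ M) (s : ℝ) : IntegrableOn (survival μ X) (Ioi s) := by
  have hind : IntegrableOn (fun _ : ℝ => (1 : ℝ)) (Ioc s M) := by
    exact integrableOn_const measure_Ioc_lt_top.ne
  have hind2 : Integrable ((Ioc s M).indicator fun _ : ℝ => (1:ℝ)) volume :=
    (integrable_indicator_iff measurableSet_Ioc).mpr hind
  refine Integrable.mono' hind2.restrict
    ((survival_measurable μ X).aestronglyMeasurable.restrict) ?_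
  refine (ae_restrict_iff' measurableSet_Ioi).mpr (Eventually.of_forall fun x hx => ?_)
  rcases le_or_gt x M with h | h
  · rw [indicator_of_mem (by exact ⟨hx, h⟩)]
    rw [Real.norm_eq_abs, abs_of_nonneg (survival_nonneg μ X x)]
    exact survival_le_one μ X x
  · rw [survival_eq_zero μ X hXΩ hΩM h.le]
    simp only [Real.norm_eq_abs, abs_zero]
    exact indicator_nonneg (fun _ _ => zero_le_one) x

lemma integral_max_eq_cumSurvival (hX : Measurable X) (hM1 : Integrable X μ) (s : ℝ) :
    ∫ ω, max (X ω - s) 0 ∂μ = cumSurvival μ X s := by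
  have hint : Integrable (fun ω => max (X ω - s) 0) μ :=
    (hM1.sub (integrable_const s)).sup (integrable_const 0)
  have hnn : 0 ≤ᵐ[μ] fun ω => max (X ω - s) 0 :=
    Eventually.of_forall fun ω => le_max_right _ _
  rw [hint.integral_eq_integral_meas_lt hnn]
  have hcong : ∀ r ∈ Ioi (0:ℝ),
      μ.real {a | r < max (X a - s) 0} = survival μ X (s + r) := by
    intro r hr
    have : {a | r < max (X a - s) 0} = {a | s + r < X a} := by
      ext a
      simp only [mem_setOf_eq, lt_max_iff]
      constructor
      · rintro (h | h)
        · linarith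
        · exact absurd hr (by simpa using h.le)
      · intro h; left; linarith
    rw [this]; rfl
  rw [setIntegral_congr_fun measurableSet_Ioi hcong]
  have h1 : (∫ r in Ioi (0:ℝ), survival μ X (s + r))
      = ∫ r : ℝ, ((Ioi s).indicator (survival μ X)) (s + r) := by
    rw [← integral_indicator measurableSet_Ioi]
    congr 1
    funext r
    by_cases hr : r ∈ Ioi (0:ℝ)
    · rw [indicator_of_mem hr, indicator_of_mem (by simpa using hr)]
    · rw [indicator_of_notMem hr, indicator_of_notMem (by simpa using hr)]
  rw [h1, integral_add_left_eq_self, integral_indicator measurableSet_Ioi]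
  rfl

end surv


section dens
variable {α : Type*} [MeasurableSpace α] {μ : Measure α} [IsProbabilityMeasure μ]
  {X : α → ℝ} {fX : ℝ → ℝ}

lemma fX_lintegral (hX : Measurable X)
    (hdens : μ.map X = volume.withDensity (fun x => ENNReal.ofReal (fX x))) :
    ∫⁻ x, ENNReal.ofReal (fX x) = 1 := by
  have h1 : (μ.map X) univ = 1 := by
    rw [Measure.map_apply hX MeasurableSet.univ]
    simp
  rw [hdens, withDensity_apply _ MeasurableSet.univ, Measure.restrict_univ] at h1
  exact h1

lemma fX_integrable (hX : Measurable X) (hfc : Continuous fX) (hfnn : ∀ x, 0 ≤ fX x)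
    (hdens : μ.map X = volume.withDensity (fun x => ENNReal.ofReal (fX x))) :
    Integrable fX := by
  refine ⟨hfc.aestronglyMeasurable, ?_⟩
  rw [hasFiniteIntegral_iff_ofReal (Eventually.of_forall hfnn),
    fX_lintegral hX hdens]
  exact ENNReal.one_lt_top

lemma survival_eq_integral (hX : Measurable X) (hfc : Continuous fX) (hfnn : ∀ x, 0 ≤ fX x)
    (hdens : μ.map X = volume.withDensity (fun x => ENNReal.ofReal (fX x))) (x : ℝ) :
    survival μ X x = ∫ z in Ioi x, fX z := by
  have h1 : μ {ω | x < X ω} = ∫⁻ z in Ioi x, ENNReal.ofReal (fX z) := by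
    have : {ω | x < X ω} = X ⁻¹' (Ioi x) := rfl
    rw [this, ← Measure.map_apply hX measurableSet_Ioi, hdens,
      withDensity_apply _ measurableSet_Ioi]
  rw [survival, h1,
    show (∫ z in Ioi x, fX z) = ENNReal.toReal (∫⁻ z in Ioi x, ENNReal.ofReal (fX z)) from
      integral_eq_lintegral_of_nonneg_ae (Eventually.of_forall hfnn)
        hfc.aestronglyMeasurable.restrict]

end dens

lemma hasDerivAt_integral_Ioi {φ : ℝ → ℝ} (hφc : Continuous φ) (hφi : Integrable φ)
    (x : ℝ) : HasDerivAt (fun y => ∫ z in Ioi y, φ z) (-φ x) x := by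
  have hrepr : (fun y => ∫ z in Ioi y, φ z)
      = fun y => (∫ z, φ z) - ((∫ z in Iic (0:ℝ), φ z) + ∫ z in (0:ℝ)..y, φ z) := by
    funext y
    have h1 := integral_add_compl (measurableSet_Iic (a := y)) hφi
    rw [compl_Iic] at h1
    have h2 := intervalIntegral.integral_Iic_sub_Iic (hφi.integrableOn) (hφi.integrableOn) (a := (0:ℝ)) (b := y)
    linarith
  rw [hrepr]
  have hFTC : HasDerivAt (fun y => ∫ z in (0:ℝ)..y, φ z) (φ x) x :=
    intervalIntegral.integral_hasDerivAt_right (hφi.intervalIntegrable)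
      (hφc.aestronglyMeasurable.stronglyMeasurableAtFilter) hφc.continuousAt
  have := ((hasDerivAt_const x (∫ z, φ z)).sub
    ((hasDerivAt_const x (∫ z in Iic (0:ℝ), φ z)).add hFTC))
  simp only [zero_sub, zero_add] at this
  exact this


section sy
variable {α : Type*} [MeasurableSpace α] {μ : Measure α} [IsProbabilityMeasure μ]
  {Ω : Set ℝ} {g gInv : ℝ → ℝ} {X : α → ℝ}

lemma survival_gInv (hg_mono : StrictMono g)
    (hgInv_right : ∀ s ∈ Ω, g (gInv s) = s)
    (hXΩ : ∀ᵐ ω ∂μ, X ω ∈ Ω) (z : ℝ) :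
    survival μ (fun ω => gInv (X ω)) z = survival μ X (g z) := by
  have hae : {ω | z < gInv (X ω)} =ᵐ[μ] {ω | g z < X ω} := by
    filter_upwards [hXΩ] with ω hω
    have hr : g (gInv (X ω)) = X ω := hgInv_right _ hω
    simp only [eq_iff_iff, Set.mem_setOf_eq]
    constructor
    · intro h
      calc g z < g (gInv (X ω)) := hg_mono h
        _ = X ω := hr
    · intro h
      have : g z < g (gInv (X ω)) := by rwa [hr]
      exact hg_mono.lt_iff_lt.mp this
  simp only [survival, measure_congr hae]

-- image of Ioi under g
lemma g_image_Ioi (hg_mono : StrictMono g) (hg_range : Set.range g = Ω) (y : ℝ) :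
    g '' Ioi y = Ioi (g y) ∩ Ω := by
  ext x
  constructor
  · rintro ⟨w, hw, rfl⟩
    exact ⟨hg_mono hw, hg_range ▸ mem_range_self w⟩
  · rintro ⟨hx, hxΩ⟩
    obtain ⟨w, rfl⟩ := hg_range ▸ hxΩ
    exact ⟨w, hg_mono.lt_iff_lt.mp hx, rfl⟩

end sy



section a4
variable {α : Type*} [MeasurableSpace α] {μ : Measure α} [IsProbabilityMeasure μ]
  {Ω : Set ℝ} {g gInv : ℝ → ℝ} {X : α → ℝ}

lemma a_eq_cumSurvival (hΩ : Ω.OrdConnected)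
    (hg_mono : StrictMono g) (hg_range : Set.range g = Ω)
    (hd : Differentiable ℝ g) (hgi : Integrable (deriv g)) (hgn : ∀ x, 0 ≤ deriv g x)
    (hgInv_right : ∀ s ∈ Ω, g (gInv s) = s)
    (hXΩ : ∀ᵐ ω ∂μ, X ω ∈ Ω) {M : ℝ} (hΩM : ∀ s ∈ Ω, s ≤ M) (y : ℝ) :
    (∫ z in Ioi y, deriv g z * survival μ (fun ω => gInv (X ω)) z)
      = cumSurvival μ X (g y) := by
  have hSY := survival_gInv hg_mono hgInv_right hXΩ (μ := μ) (X := X)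
  have himg := g_image_Ioi hg_mono hg_range y
  have hchg := integral_image_eq_integral_abs_deriv_smul (measurableSet_Ioi (a := y))
      (fun x _ => (hd x).hasDerivAt.hasDerivWithinAt) (hg_mono.injective.injOn) (survival μ X)
  have hIntOn : IntegrableOn (survival μ X) (Ioi (g y)) :=
    survival_integrableOn μ X hXΩ hΩM (g y)
  have hsplit := integral_inter_add_diff (s := Ioi (g y)) (t := Ω)
    hΩ.measurableSet hIntOn
  have hzero : ∀ x ∈ Ioi (g y) \ Ω, survival μ X x = 0 := by
    rintro x ⟨hx1, hx2⟩
    have hnull : μ {ω | ¬ X ω ∈ Ω} = 0 := by rw [← ae_iff] at *; exact hXΩ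
    have hsub : {ω | x < X ω} ⊆ {ω | ¬ X ω ∈ Ω} := by
      intro ω hω hmem
      exact hx2 (hΩ.out (hg_range ▸ mem_range_self y) hmem ⟨le_of_lt hx1, le_of_lt hω⟩)
    simp [survival, measure_mono_null hsub hnull]
  have hz : (∫ x in Ioi (g y) \ Ω, survival μ X x) = 0 := by
    rw [setIntegral_congr_fun (measurableSet_Ioi.diff hΩ.measurableSet) hzero]
    simp
  have step1 : (∫ z in Ioi y, deriv g z * survival μ (fun ω => gInv (X ω)) z)
      = ∫ z in Ioi y, |deriv g z| • survival μ X (g z) := by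
    refine setIntegral_congr_fun measurableSet_Ioi (fun z _ => ?_)
    rw [hSY z, abs_of_nonneg (hgn z), smul_eq_mul]
  rw [step1, ← hchg, himg, cumSurvival, ← hsplit, hz, add_zero]

end a4


section a1
variable {K g : ℝ → ℝ}

lemma inner_eq (hK_cont : Continuous K) (hK_nonneg : ∀ x, 0 ≤ K x)
    (hKi : Integrable K) (hd : Differentiable ℝ g) (hgc : Continuous (deriv g))
    (hgi : Integrable (deriv g)) (hgn : ∀ x, 0 ≤ deriv g x)
    {h : ℝ} (hh : 0 < h) (τ y : ℝ) :
    (∫ z in Iic y, deriv g z * kerV K ((τ - z) / h))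
      = ∫ u, K u * max (g y - g (τ - h * u)) 0 := by
  have hg_mono : Monotone g := monotone_of_deriv_nonneg hd hgn
  have key : ∀ z u : ℝ, (τ - z) / h < u ↔ τ - h * u < z := by
    intro z u
    rw [div_lt_iff₀ hh]
    constructor <;> intro hx <;> nlinarith
  set F : ℝ → ℝ → ℝ :=
    fun z u => (Ioc (τ - h * u) y).indicator (fun w => deriv g w) z * K u with hF
  set S : Set (ℝ × ℝ) := {p : ℝ × ℝ | τ - h * p.2 < p.1 ∧ p.1 ≤ y} with hSdef
  have hS : MeasurableSet S := by
    apply MeasurableSet.inter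
    · exact measurableSet_lt (by fun_prop) measurable_fst
    · exact measurableSet_le measurable_fst measurable_const
  have hrepr : Function.uncurry F = S.indicator (fun p => deriv g p.1 * K p.2) := by
    funext p
    by_cases hc : τ - h * p.2 < p.1 ∧ p.1 ≤ y
    · have h1 : p ∈ S := hc
      have h2 : p.1 ∈ Ioc (τ - h * p.2) y := hc
      simp only [Function.uncurry, hF, indicator_of_mem h1, indicator_of_mem h2]
    · have h1 : p ∉ S := hc
      have h2 : p.1 ∉ Ioc (τ - h * p.2) y := fun hm => hc (mem_Ioc.mp hm)
      simp only [Function.uncurry, hF, indicator_of_notMem h1, indicator_of_notMem h2,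
        zero_mul]
  have hFi : Integrable (Function.uncurry F) (volume.prod volume) := by
    rw [hrepr]
    refine Integrable.mono' (hgi.mul_prod hKi)
      ((((hgc.measurable.comp measurable_fst).mul
        (hK_cont.measurable.comp measurable_snd)).indicator hS).aestronglyMeasurable) ?_
    refine Eventually.of_forall fun p => ?_
    refine (norm_indicator_le_norm_self _ p).trans ?_
    rw [Real.norm_eq_abs, abs_of_nonneg (mul_nonneg (hgn _) (hK_nonneg _))]
  have step1 : (∫ z in Iic y, deriv g z * kerV K ((τ - z) / h))
      = ∫ z in Iic y, ∫ u, F z u := by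
    refine setIntegral_congr_fun measurableSet_Iic (fun z hz => ?_)
    have hker : kerV K ((τ - z) / h) = ∫ u, (Ioi ((τ - z) / h)).indicator K u := by
      rw [kerV, integral_indicator measurableSet_Ioi]
    rw [hker, ← integral_const_mul]
    refine integral_congr_ae (Eventually.of_forall fun u => ?_)
    show deriv g z * (Ioi ((τ - z) / h)).indicator K u = F z u
    by_cases hu : (τ - z) / h < u
    · have hzu : z ∈ Ioc (τ - h * u) y := ⟨(key z u).mp hu, hz⟩
      simp only [hF, indicator_of_mem (mem_Ioi.mpr hu), indicator_of_mem hzu]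
    · have hzu : z ∉ Ioc (τ - h * u) y := fun hm => hu ((key z u).mpr (mem_Ioc.mp hm).1)
      simp only [hF, indicator_of_notMem (fun hm => hu (mem_Ioi.mp hm)),
        indicator_of_notMem hzu, zero_mul, mul_zero]
  have step2 : (∫ z in Iic y, ∫ u, F z u) = ∫ z, ∫ u, F z u := by
    rw [← integral_indicator measurableSet_Iic]
    refine integral_congr_ae (Eventually.of_forall fun z => ?_)
    show (Iic y).indicator (fun z => ∫ u, F z u) z = ∫ u, F z u
    by_cases hz : z ∈ Iic y
    · rw [indicator_of_mem hz]
    · rw [indicator_of_notMem hz]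
      have hzero : (fun u => F z u) = fun _ => 0 := by
        funext u
        have hzu : z ∉ Ioc (τ - h * u) y := fun hm => hz (mem_Ioc.mp hm).2
        simp only [hF, indicator_of_notMem hzu, zero_mul]
      rw [hzero, integral_zero]
  have step3 : (∫ z, ∫ u, F z u) = ∫ u, ∫ z, F z u := integral_integral_swap hFi
  rw [step1, step2, step3]
  refine integral_congr_ae (Eventually.of_forall fun u => ?_)
  have hinner : (∫ z, F z u) = (∫ z in Ioc (τ - h * u) y, deriv g z) * K u := by
    simp only [hF]
    rw [← integral_mul_const, ← integral_indicator measurableSet_Ioc]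
    refine integral_congr_ae (Eventually.of_forall fun z => ?_)
    by_cases hz : z ∈ Ioc (τ - h * u) y
    · simp [indicator_of_mem hz]
    · simp [indicator_of_notMem hz]
  show (∫ z, F z u) = K u * max (g y - g (τ - h * u)) 0
  rw [hinner]
  rcases le_or_gt (τ - h * u) y with hle | hlt
  · rw [← intervalIntegral.integral_of_le hle, ← g_sub_eq hd hgi,
      max_eq_left (sub_nonneg.mpr (hg_mono hle)), mul_comm]
  · rw [Ioc_eq_empty (not_lt.mpr hlt.le), max_eq_right (sub_nonpos.mpr (hg_mono hlt.le))]
    simp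

end a1


section a2
variable {α : Type*} [MeasurableSpace α] {μ : Measure α} [IsProbabilityMeasure μ]
  {K g : ℝ → ℝ} {X : α → ℝ}

lemma expectation_eq (hX : Measurable X) (hM1 : Integrable X μ)
    (hK_cont : Continuous K) (hK_nonneg : ∀ x, 0 ≤ K x) (hKi : Integrable K)
    (hgcont : Continuous g) {M : ℝ} (hgM : ∀ y, |g y| ≤ M)
    (h τ : ℝ) :
    (∫ ω, (∫ u, K u * max (X ω - g (τ - h * u)) 0) ∂μ)
      = ∫ u, K u * cumSurvival μ X (g (τ - h * u)) := by
  set f : α → ℝ → ℝ := fun ω u => K u * max (X ω - g (τ - h * u)) 0 with hf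
  have hgm : Continuous (fun u : ℝ => g (τ - h * u)) := by fun_prop
  have hfi : Integrable (Function.uncurry f) (μ.prod volume) := by
    have hG : Integrable (fun p : α × ℝ => (|X p.1| + M) * K p.2) (μ.prod volume) :=
      (hM1.abs.add (integrable_const M)).mul_prod hKi
    refine Integrable.mono' hG ?_ ?_
    · apply Measurable.aestronglyMeasurable
      exact (hK_cont.measurable.comp measurable_snd).mul
        (((hX.comp measurable_fst).sub
          (hgm.measurable.comp measurable_snd)).max measurable_const)
    · refine Eventually.of_forall fun p => ?_
      have h1 : max (X p.1 - g (τ - h * p.2)) 0 ≤ |X p.1| + M := by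
        apply max_le
        · have := abs_le.mp (hgM (τ - h * p.2))
          have := le_abs_self (X p.1)
          linarith
        · have : (0:ℝ) ≤ M := (abs_nonneg _).trans (hgM 0)
          positivity
      have h2 : 0 ≤ max (X p.1 - g (τ - h * p.2)) 0 := le_max_right _ _
      rw [Real.norm_eq_abs, show Function.uncurry f p
          = K p.2 * max (X p.1 - g (τ - h * p.2)) 0 from rfl,
        abs_of_nonneg (mul_nonneg (hK_nonneg _) h2), mul_comm (|X p.1| + M) (K p.2)]
      exact mul_le_mul_of_nonneg_left h1 (hK_nonneg _)
  have hswap := integral_integral_swap hfi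
  rw [hswap]
  refine integral_congr_ae (Eventually.of_forall fun u => ?_)
  show (∫ ω, K u * max (X ω - g (τ - h * u)) 0 ∂μ) = _
  rw [integral_const_mul, integral_max_eq_cumSurvival μ X hX hM1]

end a2


lemma mvt_zero {F F' : ℝ → ℝ} (hF : ∀ x, HasDerivAt F (F' x) x) (τ : ℝ)
    (hFτ : F τ = 0) (y : ℝ) :
    ∃ c, |c - τ| ≤ |y - τ| ∧ F y = F' c * (y - τ) := by
  have hdiff : Differentiable ℝ F := fun x => (hF x).differentiableAt
  have hcont : Continuous F := hdiff.continuous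
  rcases lt_trichotomy y τ with hlt | heq | hgt
  · obtain ⟨c, hc, hceq⟩ := exists_hasDerivAt_eq_slope F F' hlt
      hcont.continuousOn (fun x _ => hF x)
    have hne : τ - y ≠ 0 := sub_ne_zero.mpr hlt.ne'
    refine ⟨c, ?_, ?_⟩
    · rw [abs_of_neg (sub_neg.mpr hc.2), abs_of_neg (sub_neg.mpr hlt)]
      linarith [hc.1]
    · rw [hceq, hFτ]
      field_simp
      ring
  · exact ⟨τ, by simp [heq], by simp [heq, hFτ]⟩
  · obtain ⟨c, hc, hceq⟩ := exists_hasDerivAt_eq_slope F F' hgt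
      hcont.continuousOn (fun x _ => hF x)
    have hne : y - τ ≠ 0 := sub_ne_zero.mpr hgt.ne'
    refine ⟨c, ?_, ?_⟩
    · rw [abs_of_pos (sub_pos.mpr hc.1), abs_of_pos (sub_pos.mpr hgt)]
      linarith [hc.2]
    · rw [hceq, hFτ]
      field_simp
      simp

lemma integrable_mul_kernel {K : ℝ → ℝ} (hK_cont : Continuous K)
    (hK_nonneg : ∀ x, 0 ≤ K x) (hKi : Integrable K)
    (hK_mom2 : Integrable (fun x => x ^ 2 * K x)) :
    Integrable (fun x => x * K x) := by
  refine Integrable.mono' (hKi.add hK_mom2) ?_ ?_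
  · exact (continuous_id.mul hK_cont).aestronglyMeasurable
  · refine Eventually.of_forall fun x => ?_
    have h1 : |x| ≤ 1 + x ^ 2 := by nlinarith [sq_nonneg (|x| - 1), sq_abs x]
    have h2 : |x * K x| = |x| * K x := by
      rw [abs_mul, abs_of_nonneg (hK_nonneg x)]
    rw [Real.norm_eq_abs, h2, Pi.add_apply]
    nlinarith [hK_nonneg x, mul_le_mul_of_nonneg_right h1 (hK_nonneg x)]

lemma integral_mul_kernel_eq_zero {K : ℝ → ℝ} (hK_symm : ∀ x, K (-x) = K x) :
    (∫ x, x * K x) = 0 := by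
  have h1 : (∫ x : ℝ, -x * K (-x)) = ∫ x, x * K x :=
    integral_neg_eq_self (fun x : ℝ => x * K x) volume
  have h2 : (∫ x : ℝ, -x * K (-x)) = - ∫ x, x * K x := by
    rw [← integral_neg]
    congr 1
    funext x
    rw [hK_symm, neg_mul]
  linarith [h1.symm.trans h2]

/-- Bias expansion of the second proposed cumulative survival function
estimator `𝕊̃_{X,2}(t)`:  as `h → 0⁺`,
`E[𝕊̃_{X,2}(t)] − 𝕊_X(t) = (h²/2) b₃(t) ∫ y² K(y) dy + o(h²)`, where
`b₃(t) = (g′(g⁻¹t))² f_X(t) − g″(g⁻¹t) S_X(t)`. -/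
theorem bias_cumSurvival_estimator_two
    {α : Type*} [MeasurableSpace α] (μ : Measure α) [IsProbabilityMeasure μ]
    -- C1: the kernel
    (K : ℝ → ℝ) (hK_cont : Continuous K) (hK_nonneg : ∀ x, 0 ≤ K x)
    (hK_symm : ∀ x, K (-x) = K x) (hK_one : (∫ x, K x) = 1)
    (hK_mom2 : Integrable (fun x => x ^ 2 * K x))
    -- C3, C4: the transformation
    (Ω : Set ℝ) (hΩ : Set.OrdConnected Ω)
    (g gInv fX : ℝ → ℝ)
    (hg_smooth : ContDiff ℝ 2 g) (hg_mono : StrictMono g)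
    (hg_range : Set.range g = Ω)
    (hgInv_left : Function.LeftInverse gInv g)
    (hgInv_right : ∀ s ∈ Ω, g (gInv s) = s)
    (hgInv_meas : Measurable gInv)
    -- the random variable and its density
    (X : α → ℝ) (hX : Measurable X) (hXΩ : ∀ᵐ ω ∂μ, X ω ∈ Ω)
    (hfX_smooth : ContDiff ℝ 2 fX) (hfX_nonneg : ∀ x, 0 ≤ fX x)
    (hdens : μ.map X = volume.withDensity (fun x => ENNReal.ofReal (fX x)))
    -- C4: the density f_Y(y) = g′(y) f_X(g(y)) of Y = g⁻¹(X) is twice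
    -- continuously differentiable with bounded second derivative
    (hfY_smooth : ContDiff ℝ 2 (fun y => deriv g y * fX (g y)))
    (hfY_bdd : ∃ C : ℝ, ∀ y,
      |deriv (deriv (fun z => deriv g z * fX (g z))) y| ≤ C)
    -- C5
    (hgK : ∃ ε > (0 : ℝ), ∀ u : ℝ, |u| < ε →
      Integrable (fun x => deriv g (u * x) * K x))
    (hgV : ∃ ε > (0 : ℝ), ∀ u : ℝ, |u| < ε →
      Integrable (fun x => deriv g (u * x) * kerV K x))
    -- C6: moments
    (hM1 : Integrable X μ) (hM2 : Integrable (fun ω => (X ω) ^ 2) μ)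
    (hM3 : Integrable (fun ω => (X ω) ^ 3) μ)
    -- the point of evaluation
    (t : ℝ) (ht : t ∈ Ω)
    -- the function a(y) = ∫_y^∞ g′(z) S_Y(z) dz is twice continuously
    -- differentiable with bounded second derivative
    (ha_smooth : ContDiff ℝ 2 (fun y =>
      ∫ z in Set.Ioi y, deriv g z * survival μ (fun ω => gInv (X ω)) z))
    (ha_bdd : ∃ C : ℝ, ∀ y,
      |deriv (deriv (fun w =>
        ∫ z in Set.Ioi w, deriv g z * survival μ (fun ω => gInv (X ω)) z)) y|
          ≤ C) :
    (fun h : ℝ =>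
        (∫ ω, (∫ z in Set.Iic (gInv (X ω)),
            deriv g z * kerV K ((gInv t - z) / h)) ∂μ)
          - cumSurvival μ X t
          - h ^ 2 / 2 *
              ((deriv g (gInv t)) ^ 2 * fX t -
                deriv (deriv g) (gInv t) * survival μ X t) *
              ∫ y, y ^ 2 * K y)
      =o[nhdsWithin (0 : ℝ) (Set.Ioi 0)] (fun h => h ^ 2) := by
  classical
  have hKi : Integrable K := _root_.integrable_of_integral_eq_one hK_one
  have hd : Differentiable ℝ g := hg_smooth.differentiable (by norm_num)
  have hgc : Continuous (deriv g) := hg_smooth.continuous_deriv (by norm_num)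
  have hgi : Integrable (deriv g) := integrable_deriv_g hgc hK_symm hK_one hgV
  have hgn : ∀ x, 0 ≤ deriv g x := fun x => deriv_nonneg_of_monotone hg_mono.monotone hd x
  have hg2 : ∀ x, HasDerivAt (deriv g) (deriv (deriv g) x) x := by
    intro x
    have h2 := (contDiff_succ_iff_deriv.mp
      (by exact_mod_cast hg_smooth : ContDiff ℝ ((1:ℕ∞)+1) g)).2.2
    exact ((h2.differentiable (by norm_num)) x).hasDerivAt
  set M : ℝ := |g 0| + ∫ x, deriv g x with hM
  have hgM : ∀ y, |g y| ≤ M := fun y => abs_g_le hd hgi hgn y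
  have hΩM : ∀ s ∈ Ω, s ≤ M := by
    intro s hs
    obtain ⟨w, rfl⟩ := hg_range ▸ hs
    exact (le_abs_self _).trans (hgM w)
  set τ : ℝ := gInv t with hτdef
  have hgτ : g τ = t := hgInv_right t ht
  set A : ℝ → ℝ := fun y =>
    ∫ z in Ioi y, deriv g z * survival μ (fun ω => gInv (X ω)) z with hAdef
  have hSYeq : ∀ z, survival μ (fun ω => gInv (X ω)) z = survival μ X (g z) :=
    survival_gInv hg_mono hgInv_right hXΩ
  have hAeq : ∀ y, A y = cumSurvival μ X (g y) := fun y =>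
    a_eq_cumSurvival hΩ hg_mono hg_range hd hgi hgn hgInv_right hXΩ hΩM y
  have hfXc : Continuous fX := hfX_smooth.continuous
  have hfXi : Integrable fX := fX_integrable hX hfXc hfX_nonneg hdens
  have hSX_deriv : ∀ x, HasDerivAt (survival μ X) (-fX x) x := by
    intro x
    have hrepr : survival μ X = fun x => ∫ z in Ioi x, fX z :=
      funext (survival_eq_integral hX hfXc hfX_nonneg hdens)
    rw [hrepr]
    exact hasDerivAt_integral_Ioi hfXc hfXi x
  have hSX_cont : Continuous (survival μ X) :=
    Differentiable.continuous (fun x => (hSX_deriv x).differentiableAt)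
  have hSYfun : (fun z => survival μ (fun ω => gInv (X ω)) z)
      = fun z => survival μ X (g z) := funext hSYeq
  have hSY_deriv : ∀ z, HasDerivAt (fun z => survival μ (fun ω => gInv (X ω)) z)
      (-fX (g z) * deriv g z) z := by
    intro z
    rw [hSYfun]
    exact (hSX_deriv (g z)).comp z (hd z).hasDerivAt
  set φ : ℝ → ℝ := fun z => deriv g z * survival μ (fun ω => gInv (X ω)) z with hφdef
  have hSYfun' : survival μ (fun ω => gInv (X ω)) = fun z => survival μ X (g z) :=
    funext hSYeq
  have hφc : Continuous φ := by
    rw [hφdef]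
    refine hgc.mul ?_
    rw [hSYfun']
    exact hSX_cont.comp hd.continuous
  have hSY0 : ∀ z, 0 ≤ survival μ (fun ω => gInv (X ω)) z :=
    fun z => survival_nonneg μ _ z
  have hSY1 : ∀ z, survival μ (fun ω => gInv (X ω)) z ≤ 1 :=
    fun z => survival_le_one μ _ z
  have hφi : Integrable φ := by
    refine hgi.mono' hφc.aestronglyMeasurable (Eventually.of_forall fun z => ?_)
    have h1 : φ z = deriv g z * survival μ (fun ω => gInv (X ω)) z := rfl
    rw [Real.norm_eq_abs, h1, abs_of_nonneg (mul_nonneg (hgn z) (hSY0 z))]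
    nlinarith [mul_nonneg (hgn z) (sub_nonneg.mpr (hSY1 z))]
  have hA_deriv : ∀ y, HasDerivAt A (-(φ y)) y := fun y => hasDerivAt_integral_Ioi hφc hφi y
  have hA_cont : Continuous A :=
    Differentiable.continuous (fun y => (hA_deriv y).differentiableAt)
  set ψ : ℝ → ℝ := fun z => deriv g z ^ 2 * fX (g z)
      - deriv (deriv g) z * survival μ (fun ω => gInv (X ω)) z with hψdef
  have hφ_deriv : ∀ z, HasDerivAt φ (-(ψ z)) z := by
    intro z
    have hmul := (hg2 z).mul (hSY_deriv z)
    exact hmul.congr_deriv (by simp only [hψdef]; ring)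
  have hDA : deriv A = fun y => -(φ y) := funext fun y => (hA_deriv y).deriv
  have hA2_deriv : ∀ z, HasDerivAt (deriv A) (ψ z) z := by
    intro z
    rw [hDA]
    have := (hφ_deriv z).neg
    simp only [neg_neg] at this
    exact this
  have hDDA : deriv (deriv A) = ψ := funext fun z => (hA2_deriv z).deriv
  obtain ⟨C, hC⟩ := ha_bdd
  have hψC : ∀ y, |ψ y| ≤ C := by
    intro y
    have h1 := hC y
    rwa [hDDA] at h1
  have hC0 : 0 ≤ C := (abs_nonneg _).trans (hC 0)
  set b : ℝ := ψ τ with hbdef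
  have hbC : |b| ≤ C := by rw [hbdef]; exact hψC τ
  set R : ℝ → ℝ := fun y => A y - A τ + φ τ * (y - τ) - b / 2 * (y - τ) ^ 2 with hRdef
  set R' : ℝ → ℝ := fun y => -(φ y) + φ τ - b * (y - τ) with hR'def
  have hR_deriv : ∀ y, HasDerivAt R (R' y) y := by
    intro y
    have h1 : HasDerivAt (fun y => A y - A τ) (-(φ y)) y := (hA_deriv y).sub_const _
    have h2 : HasDerivAt (fun y => φ τ * (y - τ)) (φ τ) y := by
      simpa using ((hasDerivAt_id y).sub_const τ).const_mul (φ τ)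
    have h3 : HasDerivAt (fun y => b / 2 * (y - τ) ^ 2) (b * (y - τ)) y := by
      have h4 := (((hasDerivAt_id y).sub_const τ).pow 2).const_mul (b / 2)
      exact h4.congr_deriv (by simp only [id, Nat.cast_ofNat]; ring)
    exact (h1.add h2).sub h3
  have hR'_deriv : ∀ y, HasDerivAt R' (ψ y - b) y := by
    intro y
    have h1 : HasDerivAt (fun y => -(φ y)) (ψ y) y := by
        have := (hφ_deriv y).neg
        simp only [neg_neg] at this
        exact this
    have h2 : HasDerivAt (fun y => b * (y - τ)) b y := by
      simpa using ((hasDerivAt_id y).sub_const τ).const_mul b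
    exact (h1.add_const (φ τ)).sub h2
  have hRτ : R τ = 0 := by simp [hRdef]
  have hR'τ : R' τ = 0 := by simp [hR'def]
  have hR'bound : ∀ y, |R' y| ≤ 2 * C * |y - τ| := by
    intro y
    obtain ⟨c, hc1, hc2⟩ := mvt_zero hR'_deriv τ hR'τ y
    rw [hc2, abs_mul]
    have h3 : |ψ c - b| ≤ 2 * C := by
      have h4 : |ψ c - b| ≤ |ψ c| + |b| := by
        rw [sub_eq_add_neg]
        exact (abs_add_le _ _).trans (by rw [abs_neg])
      have := hψC c
      linarith
    exact mul_le_mul_of_nonneg_right h3 (abs_nonneg _)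
  have hRbound : ∀ y, |R y| ≤ 2 * C * (y - τ) ^ 2 := by
    intro y
    obtain ⟨c, hc1, hc2⟩ := mvt_zero hR_deriv τ hRτ y
    rw [hc2, abs_mul]
    calc |R' c| * |y - τ| ≤ (2 * C * |c - τ|) * |y - τ| :=
          mul_le_mul_of_nonneg_right (hR'bound c) (abs_nonneg _)
      _ ≤ (2 * C * |y - τ|) * |y - τ| := by
          nlinarith [abs_nonneg (y - τ), hC0,
            mul_le_mul_of_nonneg_right hc1 (abs_nonneg (y - τ))]
      _ = 2 * C * (y - τ) ^ 2 := by rw [← sq_abs]; ring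
  have hRsmall : ∀ ε > (0:ℝ), ∃ δ > (0:ℝ), ∀ y, |y - τ| < δ → |R y| ≤ ε * (y - τ) ^ 2 := by
    intro ε hε
    have h1 : HasDerivAt R' 0 τ := by
      have := hR'_deriv τ
      rwa [hbdef, sub_self] at this
    have h2 := (hasDerivAt_iff_isLittleO.mp h1).def hε
    rw [Metric.eventually_nhds_iff] at h2
    obtain ⟨δ, hδ, hball⟩ := h2
    refine ⟨δ, hδ, fun y hy => ?_⟩
    obtain ⟨c, hc1, hc2⟩ := mvt_zero hR_deriv τ hRτ y
    have hcball : dist c τ < δ := by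
      rw [Real.dist_eq]
      exact lt_of_le_of_lt hc1 hy
    have h3 := hball hcball
    simp only [hR'τ, smul_zero, sub_zero, Real.norm_eq_abs] at h3
    rw [hc2, abs_mul]
    calc |R' c| * |y - τ| ≤ (ε * |c - τ|) * |y - τ| :=
          mul_le_mul_of_nonneg_right h3 (abs_nonneg _)
      _ ≤ ε * (y - τ) ^ 2 := by
          nlinarith [abs_nonneg (y - τ), hε.le, sq_abs (y - τ),
            mul_le_mul_of_nonneg_right hc1 (abs_nonneg (y - τ))]
  have hKu : Integrable (fun u => u * K u) :=
    integrable_mul_kernel hK_cont hK_nonneg hKi hK_mom2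
  have hKu0 : (∫ u, u * K u) = 0 := integral_mul_kernel_eq_zero hK_symm
  have hRcont : Continuous R := by
    rw [hRdef]
    exact ((hA_cont.sub continuous_const).add
      (continuous_const.mul (continuous_id.sub continuous_const))).sub
      (continuous_const.mul ((continuous_id.sub continuous_const).pow 2))
  have hAbd : ∀ y, |A y| ≤ ∫ x, deriv g x := by
    intro y
    have h1 : |A y| ≤ ∫ z in Ioi y, |φ z| := by
      show |∫ z in Ioi y, φ z| ≤ ∫ z in Ioi y, |φ z|
      simpa using norm_integral_le_integral_norm (μ := volume.restrict (Ioi y)) φ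
    have h2 : (∫ z in Ioi y, |φ z|) ≤ ∫ z in Ioi y, deriv g z := by
      refine setIntegral_mono_on (hφi.abs.integrableOn) (hgi.integrableOn)
        measurableSet_Ioi (fun z _ => ?_)
      have h3 : φ z = deriv g z * survival μ (fun ω => gInv (X ω)) z := rfl
      rw [h3, abs_of_nonneg (mul_nonneg (hgn z) (hSY0 z))]
      nlinarith [mul_nonneg (hgn z) (sub_nonneg.mpr (hSY1 z))]
    have h3 : (∫ z in Ioi y, deriv g z) ≤ ∫ x, deriv g x :=
      setIntegral_le_integral hgi (Eventually.of_forall hgn)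
    linarith
  have hkey : ∀ h : ℝ, 0 < h →
      (∫ ω, (∫ z in Iic (gInv (X ω)), deriv g z * kerV K ((τ - z) / h)) ∂μ)
        = ∫ u, K u * A (τ - h * u) := by
    intro h hh
    have hstep1 : (∫ ω, (∫ z in Iic (gInv (X ω)), deriv g z * kerV K ((τ - z) / h)) ∂μ)
        = ∫ ω, (∫ u, K u * max (X ω - g (τ - h * u)) 0) ∂μ := by
      refine integral_congr_ae ?_
      filter_upwards [hXΩ] with ω hω
      rw [inner_eq hK_cont hK_nonneg hKi hd hgc hgi hgn hh τ (gInv (X ω)),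
        hgInv_right (X ω) hω]
    rw [hstep1, expectation_eq hX hM1 hK_cont hK_nonneg hKi hd.continuous hgM h τ]
    refine integral_congr_ae (Eventually.of_forall fun u => ?_)
    show K u * cumSurvival μ X (g (τ - h * u)) = K u * A (τ - h * u)
    rw [hAeq (τ - h * u)]
  have hAτ : A τ = cumSurvival μ X t := by rw [hAeq τ, hgτ]
  have hbeq : (deriv g τ) ^ 2 * fX t - deriv (deriv g) τ * survival μ X t = b := by
    rw [hbdef, hψdef]
    simp only
    rw [hgτ, hSYeq τ, hgτ]
  have hIR : ∀ h : ℝ, Integrable (fun u => K u * R (τ - h * u)) := by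
    intro h
    refine Integrable.mono' (hK_mom2.const_mul (2 * C * h ^ 2))
      ((hK_cont.mul (hRcont.comp (by fun_prop))).aestronglyMeasurable)
      (Eventually.of_forall fun u => ?_)
    have h1 := hRbound (τ - h * u)
    have h2 : (τ - h * u - τ) ^ 2 = h ^ 2 * u ^ 2 := by ring
    rw [Real.norm_eq_abs, abs_mul, abs_of_nonneg (hK_nonneg u)]
    rw [h2] at h1
    nlinarith [hK_nonneg u, abs_nonneg (R (τ - h * u)), sq_nonneg u, sq_nonneg h]
  have heq : ∀ h ∈ Ioi (0:ℝ),
      (∫ ω, (∫ z in Iic (gInv (X ω)), deriv g z * kerV K ((τ - z) / h)) ∂μ)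
          - cumSurvival μ X t
          - h ^ 2 / 2 * ((deriv g τ) ^ 2 * fX t - deriv (deriv g) τ * survival μ X t)
            * (∫ y, y ^ 2 * K y)
        = ∫ u, K u * R (τ - h * u) := by
    intro h hh
    rw [hkey h hh]
    have hsplit : (fun u => K u * A (τ - h * u)) = fun u =>
        (K u * R (τ - h * u) + (A τ) * K u)
          + (φ τ * h * (u * K u) + b / 2 * h ^ 2 * (u ^ 2 * K u)) := by
      funext u
      simp only [hRdef]
      ring
    have I1 : Integrable (fun u => K u * R (τ - h * u)) := hIR h
    have I2 : Integrable (fun u : ℝ => A τ * K u) := hKi.const_mul (A τ)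
    have I3 : Integrable (fun u : ℝ => φ τ * h * (u * K u)) := hKu.const_mul (φ τ * h)
    have I4 : Integrable (fun u : ℝ => b / 2 * h ^ 2 * (u ^ 2 * K u)) :=
      hK_mom2.const_mul (b / 2 * h ^ 2)
    have I12 : Integrable (fun u => K u * R (τ - h * u) + A τ * K u) := I1.add I2
    have I34 : Integrable (fun u : ℝ => φ τ * h * (u * K u) + b / 2 * h ^ 2 * (u ^ 2 * K u)) :=
      I3.add I4
    rw [hsplit, integral_add I12 I34, integral_add I1 I2, integral_add I3 I4,
      integral_const_mul, integral_const_mul, integral_const_mul, hKu0, hK_one, hAτ, hbeq]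
    ring
  have hT : Tendsto (fun h => ∫ u, K u * R (τ - h * u) / h ^ 2)
      (nhdsWithin (0:ℝ) (Ioi 0)) (nhds 0) := by
    have h0 : Tendsto (fun h => ∫ u, K u * R (τ - h * u) / h ^ 2)
        (nhdsWithin (0:ℝ) (Ioi 0)) (nhds (∫ (u : ℝ), (0:ℝ))) := by
      refine tendsto_integral_filter_of_dominated_convergence
        (fun u => 2 * C * (u ^ 2 * K u)) ?_ ?_ (hK_mom2.const_mul (2 * C)) ?_
      · filter_upwards [self_mem_nhdsWithin] with h hh
        exact ((hK_cont.mul (hRcont.comp (by fun_prop))).div_const _).aestronglyMeasurable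
      · filter_upwards [self_mem_nhdsWithin] with h hh
        refine Eventually.of_forall fun u => ?_
        have hhpos : (0:ℝ) < h := hh
        have h1 := hRbound (τ - h * u)
        have h2 : (τ - h * u - τ) ^ 2 = h ^ 2 * u ^ 2 := by ring
        rw [h2] at h1
        rw [Real.norm_eq_abs, abs_div, abs_mul, abs_of_nonneg (hK_nonneg u),
          abs_of_nonneg (sq_nonneg h)]
        rw [div_le_iff₀ (by positivity)]
        nlinarith [hK_nonneg u, sq_nonneg u, sq_nonneg h, abs_nonneg (R (τ - h * u))]
      · refine Eventually.of_forall fun u => ?_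
        rcases eq_or_ne u 0 with rfl | hu
        · have : (fun h : ℝ => K 0 * R (τ - h * 0) / h ^ 2) = fun _ => 0 := by
            funext h
            simp [hRτ]
          rw [this]
          exact tendsto_const_nhds
        · rw [NormedAddCommGroup.tendsto_nhds_zero]
          intro ε hε
          have hden : (0:ℝ) < u ^ 2 * K u + 1 := by nlinarith [hK_nonneg u, sq_nonneg u]
          obtain ⟨δ, hδ, hdel⟩ := hRsmall (ε / (u ^ 2 * K u + 1)) (by positivity)
          have hmem : Ioo (0:ℝ) (δ / |u|) ∈ nhdsWithin (0:ℝ) (Ioi 0) :=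
            Ioo_mem_nhdsGT_of_mem ⟨le_refl 0, by positivity⟩
          filter_upwards [hmem] with h hh
          have hhpos : 0 < h := hh.1
          have hyτ : |(τ - h * u) - τ| < δ := by
            have h1 : |(τ - h * u) - τ| = h * |u| := by
              rw [show (τ - h * u) - τ = -(h * u) by ring, abs_neg, abs_mul,
                abs_of_pos hhpos]
            rw [h1]
            have h2 := hh.2
            rw [lt_div_iff₀ (abs_pos.mpr hu)] at h2
            exact h2
          have hRb := hdel _ hyτ
          have h2 : ((τ - h * u) - τ) ^ 2 = h ^ 2 * u ^ 2 := by ring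
          rw [h2] at hRb
          rw [Real.norm_eq_abs, abs_div, abs_mul, abs_of_nonneg (hK_nonneg u),
            abs_of_nonneg (sq_nonneg h)]
          rw [div_lt_iff₀ (by positivity)]
          have hKu' := hK_nonneg u
          have hfrac : ε / (u ^ 2 * K u + 1) * (u ^ 2 * K u) < ε := by
            rw [div_mul_eq_mul_div, div_lt_iff₀ hden]
            nlinarith [sq_nonneg u]
          have hkey2 := mul_le_mul_of_nonneg_left hRb hKu'
          have hkey3 := mul_lt_mul_of_pos_left hfrac (pow_pos hhpos 2)
          nlinarith [hkey2, hkey3]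
    simpa using h0
  have hlo : (fun h => ∫ u, K u * R (τ - h * u))
      =o[nhdsWithin (0:ℝ) (Ioi 0)] (fun h : ℝ => h ^ 2) := by
    rw [isLittleO_iff]
    intro c hc
    have h2 := (NormedAddCommGroup.tendsto_nhds_zero.mp hT) c hc
    filter_upwards [h2, self_mem_nhdsWithin] with h hlt hmem
    have hhpos : (0:ℝ) < h := hmem
    have heq2 : (∫ u, K u * R (τ - h * u)) = h ^ 2 * ∫ u, K u * R (τ - h * u) / h ^ 2 := by
      rw [← integral_const_mul]
      refine integral_congr_ae (Eventually.of_forall fun u => ?_)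
      field_simp
    rw [heq2]
    have hn2 : ‖h ^ 2‖ = h ^ 2 := by rw [Real.norm_eq_abs, abs_of_nonneg (sq_nonneg h)]
    rw [norm_mul, hn2]
    nlinarith [sq_nonneg h, norm_nonneg (∫ u, K u * R (τ - h * u) / h ^ 2)]
  have hfinal : (fun h => (∫ ω, (∫ z in Iic (gInv (X ω)),
        deriv g z * kerV K ((τ - z) / h)) ∂μ)
          - cumSurvival μ X t
          - h ^ 2 / 2 * ((deriv g τ) ^ 2 * fX t - deriv (deriv g) τ * survival μ X t)
            * (∫ y, y ^ 2 * K y))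
      =ᶠ[nhdsWithin (0:ℝ) (Ioi 0)] (fun h => ∫ u, K u * R (τ - h * u)) := by
    filter_upwards [self_mem_nhdsWithin] with h hh
    exact heq h hh
  exact hlo.congr' hfinal.symm EventuallyEq.rfl
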